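/- Let μ₁, μ₂ be probability measures on a finite set S with ν(s) = min(μ₁(s), μ₂(s)), ν₀ = Σ_s ν(s) < 1, τ = (μ₁-ν)/(1-ν₀), τ' = (μ₂-ν)/(1-ν₀). Let X ~ Bernoulli(ν₀), ξ ~ ν/ν₀, and (χ,χ') a coupling of (τ,τ'), all independent. Setting (σ,σ') = (ξ,ξ) if X = 1 and (σ,σ') = (χ,χ') if X = 0 yields a coupling of μ₁ and μ₂, and for every s ∈ S, the conditional probability ℙ(σ ≠ σ' | σ = s) ≤ (1-ν₀)·τ(s)/ν(s) (interpreted as 0 when τ(s) = 0). -/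

import Mathlib

open scoped Classical

noncomputable section

variable {S : Type*} [Fintype S] [DecidableEq S]

/-- Sample space for the RSM coupling construction: `(X, ξ, (χ, χ'))`. -/
abbrev CoupSpace (S : Type*) := Bool × S × (S × S)

/-- The joint law of independent `X ~ Bernoulli(ν₀)`, `ξ ~ ν/ν₀`, `(χ,χ') ~ κ`. -/
noncomputable def coupLaw (ν : S → ℝ) (ν₀ : ℝ) (κ : S × S → ℝ) :
    CoupSpace S → ℝ :=
  fun ω => (if ω.1 then ν₀ else 1 - ν₀) * (ν ω.2.1 / ν₀) * κ ω.2.2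

/-- `σ = ξ` if `X = 1`, else `σ = χ`. -/
def sigma1 : CoupSpace S → S := fun ω => if ω.1 then ω.2.1 else ω.2.2.1

/-- `σ' = ξ` if `X = 1`, else `σ' = χ'`. -/
def sigma2 : CoupSpace S → S := fun ω => if ω.1 then ω.2.1 else ω.2.2.2

/-- The RSM coupling construction: `(σ, σ')` is a coupling of `μ₁` and `μ₂`, and
for every `s`, `ℙ(σ ≠ σ' | σ = s) ≤ (1-ν₀)·τ(s)/ν(s)` (when `ν(s) > 0`;
interpreted as `0` when `τ(s) = 0`). -/
theorem rsm_coupling (μ₁ μ₂ : S → ℝ)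
    (h₁0 : ∀ s, 0 ≤ μ₁ s) (h₁1 : ∑ s : S, μ₁ s = 1)
    (h₂0 : ∀ s, 0 ≤ μ₂ s) (h₂1 : ∑ s : S, μ₂ s = 1)
    (ν : S → ℝ) (hν : ∀ s, ν s = min (μ₁ s) (μ₂ s))
    (ν₀ : ℝ) (hν₀ : ν₀ = ∑ s : S, ν s) (hpos : 0 < ν₀) (hlt : ν₀ < 1)
    (τ τ' : S → ℝ)
    (hτ : ∀ s, τ s = (μ₁ s - ν s) / (1 - ν₀))
    (hτ' : ∀ s, τ' s = (μ₂ s - ν s) / (1 - ν₀))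
    (κ : S × S → ℝ) (hκ0 : ∀ p, 0 ≤ κ p)
    (hκ1 : ∀ c, ∑ c' : S, κ (c, c') = τ c)
    (hκ2 : ∀ c', ∑ c : S, κ (c, c') = τ' c') :
    (∀ s, (∑ ω : CoupSpace S, if sigma1 ω = s then coupLaw ν ν₀ κ ω else 0) = μ₁ s) ∧
    (∀ s, (∑ ω : CoupSpace S, if sigma2 ω = s then coupLaw ν ν₀ κ ω else 0) = μ₂ s) ∧
    (∀ s, 0 < ν s →
      (∑ ω : CoupSpace S, if sigma1 ω = s ∧ sigma1 ω ≠ sigma2 ω then coupLaw ν ν₀ κ ω else 0)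
        ≤ ((1 - ν₀) * τ s / ν s) *
          (∑ ω : CoupSpace S, if sigma1 ω = s then coupLaw ν ν₀ κ ω else 0)) ∧
    (∀ s, τ s = 0 →
      (∑ ω : CoupSpace S, if sigma1 ω = s ∧ sigma1 ω ≠ sigma2 ω then coupLaw ν ν₀ κ ω else 0)
        = 0) := by
  have h1mν : (0:ℝ) < 1 - ν₀ := by linarith
  have hν0 : ∀ s, 0 ≤ ν s := fun s => by
    rw [hν]; exact le_min (h₁0 s) (h₂0 s)
  have hνle1 : ∀ s, ν s ≤ μ₁ s := fun s => by rw [hν]; exact min_le_left _ _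
  have hνle2 : ∀ s, ν s ≤ μ₂ s := fun s => by rw [hν]; exact min_le_right _ _
  have hτ0 : ∀ s, 0 ≤ τ s := fun s => by
    rw [hτ]; exact div_nonneg (by linarith [hνle1 s]) h1mν.le
  have hτtot : ∑ c : S, τ c = 1 := by
    simp only [hτ, ← Finset.sum_div]
    rw [Finset.sum_sub_distrib, h₁1, ← hν₀]
    field_simp
  have hτ'tot : ∑ c : S, τ' c = 1 := by
    simp only [hτ', ← Finset.sum_div]
    rw [Finset.sum_sub_distrib, h₂1, ← hν₀]
    field_simp
  have hκtotP : ∑ p : S × S, κ p = 1 := by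
    rw [Fintype.sum_prod_type]; simp only [hκ1]; exact hτtot
  have hνdiv : ∑ x : S, ν x / ν₀ = 1 := by
    rw [← Finset.sum_div, ← hν₀]; field_simp
  -- first marginal
  have key1 : ∀ s, (∑ ω : CoupSpace S, if sigma1 ω = s then coupLaw ν ν₀ κ ω else 0)
      = ν s + (1 - ν₀) * τ s := by
    intro s
    rw [Fintype.sum_prod_type, Fintype.sum_bool]
    simp only [sigma1, coupLaw, if_true, Bool.false_eq_true, if_false]
    have htrue : (∑ y : S × S × S,
        if y.1 = s then ν₀ * (ν y.1 / ν₀) * κ y.2 else 0) = ν s := by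
      rw [Fintype.sum_prod_type]
      have h1 : ∀ x : S, (∑ p : S × S, if x = s then ν₀ * (ν x / ν₀) * κ p else 0)
          = if x = s then ν₀ * (ν x / ν₀) else 0 := by
        intro x
        split
        · rw [← Finset.mul_sum, hκtotP, mul_one]
        · simp
      rw [Finset.sum_congr rfl fun x _ => h1 x,
        Finset.sum_ite_eq' Finset.univ s fun x => ν₀ * (ν x / ν₀)]
      simp only [Finset.mem_univ, if_true]
      field_simp
    have hfalse : (∑ y : S × S × S,
        if y.2.1 = s then (1 - ν₀) * (ν y.1 / ν₀) * κ y.2 else 0)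
        = (1 - ν₀) * τ s := by
      rw [Fintype.sum_prod_type]
      have h1 : ∀ x : S, (∑ p : S × S, if p.1 = s then (1 - ν₀) * (ν x / ν₀) * κ p else 0)
          = ν x / ν₀ * ((1 - ν₀) * τ s) := by
        intro x
        rw [Fintype.sum_prod_type]
        have h2 : ∀ c : S, (∑ c' : S, if c = s then (1 - ν₀) * (ν x / ν₀) * κ (c, c') else 0)
            = if c = s then (1 - ν₀) * (ν x / ν₀) * τ c else 0 := by
          intro c; split
          · rw [← Finset.mul_sum, hκ1]
          · simp
        rw [Finset.sum_congr rfl fun c _ => h2 c,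
          Finset.sum_ite_eq' Finset.univ s fun c => (1 - ν₀) * (ν x / ν₀) * τ c]
        simp only [Finset.mem_univ, if_true]
        ring
      rw [Finset.sum_congr rfl fun x _ => h1 x, ← Finset.sum_mul, hνdiv, one_mul]
    rw [htrue, hfalse]
  -- second marginal
  have key2 : ∀ s, (∑ ω : CoupSpace S, if sigma2 ω = s then coupLaw ν ν₀ κ ω else 0)
      = ν s + (1 - ν₀) * τ' s := by
    intro s
    rw [Fintype.sum_prod_type, Fintype.sum_bool]
    simp only [sigma2, coupLaw, if_true, Bool.false_eq_true, if_false]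
    have htrue : (∑ y : S × S × S,
        if y.1 = s then ν₀ * (ν y.1 / ν₀) * κ y.2 else 0) = ν s := by
      rw [Fintype.sum_prod_type]
      have h1 : ∀ x : S, (∑ p : S × S, if x = s then ν₀ * (ν x / ν₀) * κ p else 0)
          = if x = s then ν₀ * (ν x / ν₀) else 0 := by
        intro x
        split
        · rw [← Finset.mul_sum, hκtotP, mul_one]
        · simp
      rw [Finset.sum_congr rfl fun x _ => h1 x,
        Finset.sum_ite_eq' Finset.univ s fun x => ν₀ * (ν x / ν₀)]
      simp only [Finset.mem_univ, if_true]
      field_simp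
    have hfalse : (∑ y : S × S × S,
        if y.2.2 = s then (1 - ν₀) * (ν y.1 / ν₀) * κ y.2 else 0)
        = (1 - ν₀) * τ' s := by
      rw [Fintype.sum_prod_type]
      have h1 : ∀ x : S, (∑ p : S × S, if p.2 = s then (1 - ν₀) * (ν x / ν₀) * κ p else 0)
          = ν x / ν₀ * ((1 - ν₀) * τ' s) := by
        intro x
        rw [Fintype.sum_prod_type]
        have h2 : ∀ c : S, (∑ c' : S, if c' = s then (1 - ν₀) * (ν x / ν₀) * κ (c, c') else 0)
            = (1 - ν₀) * (ν x / ν₀) * κ (c, s) := by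
          intro c
          rw [Finset.sum_ite_eq' Finset.univ s fun c' => (1 - ν₀) * (ν x / ν₀) * κ (c, c')]
          simp
        rw [Finset.sum_congr rfl fun c _ => h2 c, ← Finset.mul_sum, hκ2]
        ring
      rw [Finset.sum_congr rfl fun x _ => h1 x, ← Finset.sum_mul, hνdiv, one_mul]
    rw [htrue, hfalse]
  -- bad-event sum
  have key3 : ∀ s, (∑ ω : CoupSpace S,
      if sigma1 ω = s ∧ sigma1 ω ≠ sigma2 ω then coupLaw ν ν₀ κ ω else 0)
      = (1 - ν₀) * (∑ c' : S, if c' ≠ s then κ (s, c') else 0) := by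
    intro s
    rw [Fintype.sum_prod_type, Fintype.sum_bool]
    simp only [sigma1, sigma2, coupLaw, if_true, Bool.false_eq_true, if_false]
    have htrue : (∑ y : S × S × S,
        if y.1 = s ∧ y.1 ≠ y.1 then ν₀ * (ν y.1 / ν₀) * κ y.2 else 0) = 0 := by
      simp
    have hfalse : (∑ y : S × S × S,
        if y.2.1 = s ∧ y.2.1 ≠ y.2.2 then (1 - ν₀) * (ν y.1 / ν₀) * κ y.2 else 0)
        = (1 - ν₀) * (∑ c' : S, if c' ≠ s then κ (s, c') else 0) := by
      rw [Fintype.sum_prod_type]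
      have h1 : ∀ x : S, (∑ p : S × S,
          if p.1 = s ∧ p.1 ≠ p.2 then (1 - ν₀) * (ν x / ν₀) * κ p else 0)
          = ν x / ν₀ * ((1 - ν₀) * (∑ c' : S, if c' ≠ s then κ (s, c') else 0)) := by
        intro x
        rw [Fintype.sum_prod_type]
        have h2 : ∀ c : S, (∑ c' : S,
            if c = s ∧ c ≠ c' then (1 - ν₀) * (ν x / ν₀) * κ (c, c') else 0)
            = if c = s then
                ∑ c' : S, if c' ≠ s then (1 - ν₀) * (ν x / ν₀) * κ (s, c') else 0
              else 0 := by
          intro c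
          split
          · next h =>
            subst h
            refine Finset.sum_congr rfl fun c' _ => ?_
            by_cases hcc : c = c'
            · simp [hcc]
            · simp [hcc, Ne.symm hcc]
          · next h =>
            refine Finset.sum_eq_zero fun c' _ => ?_
            simp [h]
        rw [Finset.sum_congr rfl fun c _ => h2 c,
          Finset.sum_ite_eq' Finset.univ s
            (fun c => ∑ c' : S, if c' ≠ s then (1 - ν₀) * (ν x / ν₀) * κ (s, c') else 0)]
        simp only [Finset.mem_univ, if_true]
        rw [Finset.mul_sum, Finset.mul_sum]
        refine Finset.sum_congr rfl fun c' _ => ?_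
        split <;> ring
      rw [Finset.sum_congr rfl fun x _ => h1 x, ← Finset.sum_mul, hνdiv, one_mul]
    rw [htrue, hfalse, zero_add]
  have hμ1eq : ∀ s, ν s + (1 - ν₀) * τ s = μ₁ s := by
    intro s; rw [hτ]; field_simp; ring
  have hμ2eq : ∀ s, ν s + (1 - ν₀) * τ' s = μ₂ s := by
    intro s; rw [hτ']; field_simp; ring
  have hBle : ∀ s, (∑ c' : S, if c' ≠ s then κ (s, c') else 0) ≤ τ s := by
    intro s
    rw [← hκ1 s]
    refine Finset.sum_le_sum fun c' _ => ?_
    split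
    · exact le_refl _
    · exact hκ0 _
  refine ⟨fun s => by rw [key1, hμ1eq], fun s => by rw [key2, hμ2eq], ?_, ?_⟩
  · intro s hs
    rw [key1, key3, hμ1eq]
    have h1 : (1 - ν₀) * (∑ c' : S, if c' ≠ s then κ (s, c') else 0) ≤ (1 - ν₀) * τ s :=
      mul_le_mul_of_nonneg_left (hBle s) h1mν.le
    have h2 : (1 - ν₀) * τ s ≤ (1 - ν₀) * τ s / ν s * μ₁ s := by
      rw [div_mul_eq_mul_div, le_div_iff₀ hs]
      have := mul_le_mul_of_nonneg_left (hνle1 s) (mul_nonneg h1mν.le (hτ0 s))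
      linarith [this]
    linarith
  · intro s hs
    rw [key3]
    have hall : ∀ c' : S, κ (s, c') = 0 := by
      intro c'
      have hsum : ∑ c' : S, κ (s, c') = 0 := by rw [hκ1, hs]
      have := (Finset.sum_eq_zero_iff_of_nonneg (fun c' _ => hκ0 (s, c'))).mp hsum
      exact this c' (Finset.mem_univ _)
    simp [hall]

end
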